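/- Let A ⊆ {0,1}^{n_A} have asymmetric norm N_A with respect to its last coordinate and B ⊆ {0,1}^{n_B} have asymmetric norm N_B with respect to its first coordinate. Then the amalgamated direct sum A ⊕̇ B = {(a,0,b) : (a,0) ∈ A, (0,b) ∈ B} ∪ {(a,1,b) : (a,1) ∈ A, (1,b) ∈ B} has asymmetric norm N_A + N_B - 1 with respect to coordinate n_A. -/

import Mathlib

open Finset

abbrev Vec (n : ℕ) := Fin n → Bool

noncomputable def dS {n : ℕ} (x : Vec n) (Y : Set (Vec n)) : ℕ∞ :=
  ⨅ y ∈ Y, (hammingDist x y : ℕ∞)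

noncomputable def dA {n : ℕ} (x : Vec n) (Y : Set (Vec n)) : ℕ∞ :=
  ⨅ y ∈ {y ∈ Y | ∀ i, x i ≤ y i}, (hammingDist x y : ℕ∞)

def sec {n : ℕ} (C : Set (Vec n)) (i : Fin n) (b : Bool) : Set (Vec n) :=
  {c ∈ C | c i = b}

def NormAt {n : ℕ} (C : Set (Vec n)) (i : Fin n) (N : ℕ) : Prop :=
  ∀ x : Vec n, dS x (sec C i false) + dS x (sec C i true) ≤ (N : ℕ∞)

def AsymNormAt {n : ℕ} (C : Set (Vec n)) (i : Fin n) (N : ℕ) : Prop :=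
  ∀ x : Vec n,
    (x i = false → dA x (sec C i false) + dA x (sec C i true) ≤ (N : ℕ∞)) ∧
    (x i = true → 2 * dA x (sec C i true) + 1 ≤ (N : ℕ∞))

def ads {nA nB : ℕ} (A : Set (Vec (nA+1))) (B : Set (Vec (nB+1))) :
    Set (Vec (nA+1+nB)) :=
  {z | ∃ (a : Fin nA → Bool) (t : Bool) (b : Fin nB → Bool),
    Fin.snoc a t ∈ A ∧ Fin.cons t b ∈ B ∧ z = Fin.append (Fin.snoc a t) b}

def flipCoord {n : ℕ} (x : Vec n) (i : Fin n) : Vec n := Function.update x i (!x i)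

def PatchedAt {n : ℕ} (S T : Set (Vec n)) (i : Fin n) (N : ℕ) : Prop :=
  ∀ x : Vec n, (dS x (sec S i false) + dS x (sec S i true) ≤ (N : ℕ∞))
    ∨ (x ∈ T ∧ flipCoord x i ∈ T)

def AsymPatchedAt {n : ℕ} (S T : Set (Vec n)) (i : Fin n) (N : ℕ) : Prop :=
  ∀ x : Vec n,
    (x i = false → (dA x (sec S i false) + dA x (sec S i true) ≤ (N : ℕ∞))
       ∨ (x ∈ T ∧ flipCoord x i ∈ T)) ∧
    (x i = true → (2 * dA x (sec S i true) + 1 ≤ (N : ℕ∞)) ∨ x ∈ T)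

/-! ### Auxiliary lemmas -/

lemma hd_sum {n : ℕ} {β : Fin n → Type*} [∀ i, DecidableEq (β i)] (x y : ∀ i, β i) :
    hammingDist x y = ∑ i, if x i = y i then 0 else 1 := by
  rw [hammingDist, Finset.card_filter]
  congr 1; ext i; by_cases h : x i = y i <;> simp [h]

lemma hd_append {m k : ℕ} (u u' : Fin m → Bool) (v v' : Fin k → Bool) :
    hammingDist (Fin.append u v) (Fin.append u' v') = hammingDist u u' + hammingDist v v' := by
  simp only [hd_sum, Fin.sum_univ_add, Fin.append_left, Fin.append_right]

lemma hd_cons {m : ℕ} (s s' : Bool) (v v' : Fin m → Bool) :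
    hammingDist (Fin.cons s v : Vec (m+1)) (Fin.cons s' v') =
      (if s = s' then 0 else 1) + hammingDist v v' := by
  rw [hd_sum (β := fun _ : Fin (m+1) => Bool) (Fin.cons s v) (Fin.cons s' v'), hd_sum v v',
    Fin.sum_univ_succ]
  simp only [Fin.cons_succ, Fin.cons_zero]

lemma eq_append {m k : ℕ} (x : Vec (m + k)) :
    x = Fin.append (fun j => x (Fin.castAdd k j)) (fun j => x (Fin.natAdd m j)) := by
  funext i
  refine Fin.addCases (fun j => ?_) (fun j => ?_) i <;>
    simp [Fin.append_left, Fin.append_right]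

lemma dA_le {n : ℕ} {x y : Vec n} {Y : Set (Vec n)} (hy : y ∈ Y) (hle : ∀ i, x i ≤ y i) :
    dA x Y ≤ (hammingDist x y : ℕ∞) := by
  rw [dA]; exact iInf₂_le y ⟨hy, hle⟩

lemma dA_attain {n : ℕ} {x : Vec n} {Y : Set (Vec n)} (h : dA x Y ≠ ⊤) :
    ∃ y ∈ Y, (∀ i, x i ≤ y i) ∧ dA x Y = (hammingDist x y : ℕ∞) := by
  have hS : {y ∈ Y | ∀ i, x i ≤ y i}.Nonempty := by
    by_contra hne
    rw [Set.not_nonempty_iff_eq_empty] at hne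
    exact h (by rw [dA, hne]; simp)
  obtain ⟨y, hyS, hym⟩ := Nat.sInf_mem (hS.image (hammingDist x))
  refine ⟨y, hyS.1, hyS.2, le_antisymm (dA_le hyS.1 hyS.2) ?_⟩
  rw [dA]
  refine le_iInf₂ fun z hz => ?_
  exact_mod_cast (hym ▸ Nat.sInf_le ⟨z, hz, rfl⟩ : hammingDist x y ≤ hammingDist x z)

lemma ecast (s t : Bool) :
    ((if s = t then 0 else 1 : ℕ) : ℕ∞) = (if s = t then 0 else 1) := by
  split <;> simp

lemma key {nA nB : ℕ} (A : Set (Vec (nA+1))) (B : Set (Vec (nB+1))) (t : Bool)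
    (u : Vec (nA+1)) (v : Vec nB) :
    dA (Fin.append u v) (sec (ads A B) (Fin.castAdd nB (Fin.last nA)) t)
      + (if u (Fin.last nA) = t then (0:ℕ∞) else 1)
    = dA u (sec A (Fin.last nA) t)
      + dA (Fin.cons (u (Fin.last nA)) v : Vec (nB+1)) (sec B 0 t) := by
  classical
  apply le_antisymm
  · by_cases hDA : dA u (sec A (Fin.last nA) t) = ⊤
    · simp [hDA]
    by_cases hDB : dA (Fin.cons (u (Fin.last nA)) v : Vec (nB+1)) (sec B 0 t) = ⊤
    · simp [hDB]
    obtain ⟨c, hcS, hcle, hc⟩ := dA_attain hDA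
    obtain ⟨d, hdS, hdle, hd⟩ := dA_attain hDB
    obtain ⟨hcA, hct⟩ := hcS
    obtain ⟨hdB, hdt⟩ := hdS
    have hc' : (Fin.snoc (Fin.init c) t : Vec (nA+1)) = c := by
      rw [← hct]; exact Fin.snoc_init_self c
    have hd' : (Fin.cons t (Fin.tail d) : Vec (nB+1)) = d := by
      rw [← hdt]; exact Fin.cons_self_tail d
    have hzmem : Fin.append c (Fin.tail d)
        ∈ sec (ads A B) (Fin.castAdd nB (Fin.last nA)) t := by
      refine ⟨⟨Fin.init c, t, Fin.tail d, by rw [hc']; exact hcA,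
        by rw [hd']; exact hdB, by rw [hc']⟩, ?_⟩
      simp [Fin.append_left, hct]
    have hzle : ∀ j, Fin.append u v j ≤ Fin.append c (Fin.tail d) j := by
      intro j
      refine Fin.addCases (fun j => ?_) (fun j => ?_) j
      · simpa [Fin.append_left] using hcle j
      · have := hdle j.succ
        simpa [Fin.append_right, Fin.cons_succ, Fin.tail] using this
    have hTle := dA_le hzmem hzle
    have hsplit := hd_append u c v (Fin.tail d)
    have hdcalc : hammingDist (Fin.cons (u (Fin.last nA)) v : Vec (nB+1)) d
        = (if u (Fin.last nA) = t then 0 else 1) + hammingDist v (Fin.tail d) := by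
      conv_lhs => rw [← hd']
      rw [hd_cons]
    rw [hc, hd, hdcalc]
    calc dA (Fin.append u v) (sec (ads A B) (Fin.castAdd nB (Fin.last nA)) t)
          + (if u (Fin.last nA) = t then (0:ℕ∞) else 1)
        ≤ (hammingDist (Fin.append u v) (Fin.append c (Fin.tail d)) : ℕ∞)
          + (if u (Fin.last nA) = t then (0:ℕ∞) else 1) := add_le_add hTle le_rfl
      _ = ((hammingDist u c : ℕ∞) + ((if u (Fin.last nA) = t then (0:ℕ) else 1 : ℕ)
            + (hammingDist v (Fin.tail d) : ℕ))) := by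
          rw [hsplit]; push_cast [ecast]; ring
      _ = _ := by push_cast [ecast]; ring
  · by_cases hT : dA (Fin.append u v) (sec (ads A B) (Fin.castAdd nB (Fin.last nA)) t) = ⊤
    · rw [hT, top_add]; exact le_top
    obtain ⟨z, hzS, hzle, hz⟩ := dA_attain hT
    obtain ⟨⟨a, t', b, haA, hbB, rfl⟩, hzt⟩ := hzS
    have ht' : t' = t := by simpa [Fin.append_left, Fin.snoc_last] using hzt
    subst t'
    have hule : ∀ j, u j ≤ (Fin.snoc a t : Vec (nA+1)) j := by
      intro j
      simpa [Fin.append_left] using hzle (Fin.castAdd nB j)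
    have h1 : dA u (sec A (Fin.last nA) t)
        ≤ (hammingDist u (Fin.snoc a t : Vec (nA+1)) : ℕ∞) :=
      dA_le ⟨haA, by simp⟩ hule
    have hvle : ∀ j, (Fin.cons (u (Fin.last nA)) v : Vec (nB+1)) j
        ≤ (Fin.cons t b : Vec (nB+1)) j := by
      intro j
      refine Fin.cases (motive := fun j => (Fin.cons (u (Fin.last nA)) v : Vec (nB+1)) j
        ≤ (Fin.cons t b : Vec (nB+1)) j) ?_ (fun j => ?_) j
      · simpa using hule (Fin.last nA)
      · simpa [Fin.append_right, Fin.cons_succ] using hzle (Fin.natAdd (nA+1) j)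
    have h2 : dA (Fin.cons (u (Fin.last nA)) v : Vec (nB+1)) (sec B 0 t)
        ≤ (hammingDist (Fin.cons (u (Fin.last nA)) v : Vec (nB+1)) (Fin.cons t b) : ℕ∞) :=
      dA_le ⟨hbB, by simp⟩ hvle
    rw [hz, hd_append]
    calc dA u (sec A (Fin.last nA) t)
          + dA (Fin.cons (u (Fin.last nA)) v : Vec (nB+1)) (sec B 0 t)
        ≤ (hammingDist u (Fin.snoc a t : Vec (nA+1)) : ℕ∞)
          + (hammingDist (Fin.cons (u (Fin.last nA)) v : Vec (nB+1)) (Fin.cons t b) : ℕ∞) :=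
          add_le_add h1 h2
      _ = _ := by rw [hd_cons]; push_cast [ecast]; ring

theorem ads_asym_norm (nA nB NA NB : ℕ)
    (A : Set (Vec (nA + 1))) (B : Set (Vec (nB + 1)))
    (hA : AsymNormAt A (Fin.last nA) NA) (hB : AsymNormAt B 0 NB) :
    AsymNormAt (ads A B) (Fin.castAdd nB (Fin.last nA)) (NA + NB - 1) := by
  intro x
  have hrw := eq_append (m := nA+1) (k := nB) x
  rw [hrw]
  set u : Vec (nA+1) := fun j => x (Fin.castAdd nB j) with hu_def
  set v : Vec nB := fun j => x (Fin.natAdd (nA+1) j) with hv_def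
  simp only [Fin.append_left]
  have k0 := key A B false u v
  have k1 := key A B true u v
  cases hu : u (Fin.last nA) with
  | false =>
    simp only [hu] at k0 k1
    simp at k0 k1
    -- k0 : T_f = DA_f + DB_f ;  k1 : T_t + 1 = DA_t + DB_t
    have hAu := (hA u).1 hu
    have hBv := (hB (Fin.cons false v)).1 (by simp)
    constructor
    · intro _
      have hsum : dA (Fin.append u v) (sec (ads A B) (Fin.castAdd nB (Fin.last nA)) false)
          + dA (Fin.append u v) (sec (ads A B) (Fin.castAdd nB (Fin.last nA)) true) + 1
          ≤ (NA : ℕ∞) + NB := by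
        calc dA (Fin.append u v) (sec (ads A B) (Fin.castAdd nB (Fin.last nA)) false)
            + dA (Fin.append u v) (sec (ads A B) (Fin.castAdd nB (Fin.last nA)) true) + 1
            = (dA u (sec A (Fin.last nA) false) + dA u (sec A (Fin.last nA) true))
              + (dA (Fin.cons false v : Vec (nB+1)) (sec B 0 false)
                + dA (Fin.cons false v : Vec (nB+1)) (sec B 0 true)) := by
              rw [add_assoc, k1, k0]; ring
          _ ≤ (NA : ℕ∞) + NB := add_le_add hAu hBv
      rcases Nat.eq_zero_or_pos (NA + NB) with h0 | h1
      · exfalso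
        have hNA : NA = 0 := by omega
        have hNB : NB = 0 := by omega
        rw [hNA] at hAu; rw [hNB] at hBv
        have hDAt : dA u (sec A (Fin.last nA) true) = 0 := by
          have := le_trans (le_add_self) hAu
          simpa using this
        have hDBt : dA (Fin.cons false v : Vec (nB+1)) (sec B 0 true) = 0 := by
          have := le_trans (le_add_self) hBv
          simpa using this
        rw [hDAt, hDBt] at k1
        simp at k1
      · have hcast : ((NA + NB - 1 : ℕ) : ℕ∞) + 1 = ((NA : ℕ∞) + NB) := by
          rw [show ((1:ℕ∞)) = ((1:ℕ):ℕ∞) from rfl, ← Nat.cast_add,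
            show NA + NB - 1 + 1 = NA + NB by omega, Nat.cast_add]
        refine (ENat.add_le_add_iff_right (by simp : (1:ℕ∞) ≠ ⊤)).mp ?_
        rw [hcast]; exact hsum
    · intro h; simp at h
  | true =>
    simp only [hu] at k1
    simp at k1
    -- k1 : T_t = DA_t + DB_t
    have hAu := (hA u).2 hu
    have hBv := (hB (Fin.cons true v)).2 (by simp)
    constructor
    · intro h; simp at h
    · intro _
      have hsum : 2 * dA (Fin.append u v) (sec (ads A B) (Fin.castAdd nB (Fin.last nA)) true)
          + 1 + 1 ≤ (NA : ℕ∞) + NB := by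
        calc 2 * dA (Fin.append u v) (sec (ads A B) (Fin.castAdd nB (Fin.last nA)) true) + 1 + 1
            = (2 * dA u (sec A (Fin.last nA) true) + 1)
              + (2 * dA (Fin.cons true v : Vec (nB+1)) (sec B 0 true) + 1) := by
              rw [k1]; ring
          _ ≤ (NA : ℕ∞) + NB := add_le_add hAu hBv
      have h1 : 1 ≤ NA := by
        have : (1 : ℕ∞) ≤ (NA : ℕ∞) := le_trans (by simp) hAu
        exact_mod_cast this
      have hcast : ((NA + NB - 1 : ℕ) : ℕ∞) + 1 = ((NA : ℕ∞) + NB) := by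
        rw [show ((1:ℕ∞)) = ((1:ℕ):ℕ∞) from rfl, ← Nat.cast_add,
          show NA + NB - 1 + 1 = NA + NB by omega, Nat.cast_add]
      refine (ENat.add_le_add_iff_right (by simp : (1:ℕ∞) ≠ ⊤)).mp ?_
      rw [hcast]; exact hsum
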